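/- Let s, n ≥ 1, let Γ be a real s×s matrix such that λ_min((Γ + Γᵀ)/2) < 0, let M be a real symmetric positive definite n×n matrix, let A be a real symmetric positive semidefinite n×n matrix, let P be a real symmetric positive definite n×n matrix, and let Δt ≥ 0 satisfy λ_min(P^{-1/2} M P^{-1/2}) + Δt · λ_min((Γ + Γᵀ)/2) · λ_max(P^{-1/2} A P^{-1/2}) > 0. Set 𝔹 = (I_s ⊗ P^{-1/2})(I_s ⊗ M + Δt·(Γ ⊗ A))(I_s ⊗ P^{-1/2}). Then the symmetric part (𝔹 + 𝔹ᵀ)/2 is positive definite and κ̃(𝔹) ≤ (λ_max(P^{-1/2} M P^{-1/2}) + Δt · σ_max(Γ) · λ_max(P^{-1/2} A P^{-1/2})) / (λ_min(P^{-1/2} M P^{-1/2}) + Δt · λ_min((Γ + Γᵀ)/2) · λ_max(P^{-1/2} A P^{-1/2})). -/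

import Mathlib

open Matrix Kronecker

/-- The smallest eigenvalue of a (symmetric) real matrix, as the infimum of its spectrum. -/
noncomputable def lamMin {m : Type*} [Fintype m] [DecidableEq m] (A : Matrix m m ℝ) : ℝ :=
  sInf (spectrum ℝ A)

/-- The largest eigenvalue of a (symmetric) real matrix, as the supremum of its spectrum. -/
noncomputable def lamMax {m : Type*} [Fintype m] [DecidableEq m] (A : Matrix m m ℝ) : ℝ :=
  sSup (spectrum ℝ A)

/-- The largest singular value of a real square matrix. -/
noncomputable def sigmaMax {m : Type*} [Fintype m] [DecidableEq m] (B : Matrix m m ℝ) : ℝ :=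
  Real.sqrt (lamMax (Bᵀ * B))

/-- `P^{-1/2}`: the inverse of the unique symmetric positive definite square root of `P`. -/
noncomputable def Matrix.PosDef.invSqrt {m : Type*} [Fintype m] [DecidableEq m]
    {P : Matrix m m ℝ} (hP : P.PosDef) : Matrix m m ℝ :=
  (hP.isHermitian.eigenvectorUnitary.1 *
    diagonal (Real.sqrt ∘ hP.isHermitian.eigenvalues) *
    (star hP.isHermitian.eigenvectorUnitary : Matrix m m ℝ))⁻¹

/-- The modified condition number `κ̃(B) = σ_max(B) / λ_min((B + Bᵀ)/2)`. -/
noncomputable def ktilde {m : Type*} [Fintype m] [DecidableEq m] (B : Matrix m m ℝ) : ℝ :=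
  sigmaMax B / lamMin ((1 / 2 : ℝ) • (B + Bᵀ))


set_option linter.unusedSectionVars false

section Aux

variable {m : Type*} [Fintype m] [DecidableEq m]

lemma real_conjT {m' : Type*} (A : Matrix m m' ℝ) : Aᴴ = Aᵀ := by
  ext i j; simp [conjTranspose_apply]

lemma psd_smul' {S : Matrix m m ℝ} (hS : S.PosSemidef) {c : ℝ} (hc : 0 ≤ c) :
    (c • S).PosSemidef := by
  refine ⟨?_, fun x => ?_⟩
  · show _ᴴ = _
    rw [conjTranspose_smul, hS.1]
    simp
  · exact (hS.smul hc).2 x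

lemma psd_kron {m' : Type*} [Fintype m'] [DecidableEq m'] {S : Matrix m m ℝ}
    {T : Matrix m' m' ℝ} (hS : S.PosSemidef) (hT : T.PosSemidef) :
    (S ⊗ₖ T).PosSemidef := by
  exact hS.kronecker hT

lemma kron_sub {m' : Type*} [Fintype m'] (A : Matrix m m ℝ) (B C : Matrix m' m' ℝ) :
    A ⊗ₖ (B - C) = A ⊗ₖ B - A ⊗ₖ C := by
  ext ⟨i, j⟩ ⟨k, l⟩
  simp [kroneckerMap_apply, mul_sub]

lemma sub_kron {m' : Type*} [Fintype m'] (A B : Matrix m m ℝ) (C : Matrix m' m' ℝ) :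
    (A - B) ⊗ₖ C = A ⊗ₖ C - B ⊗ₖ C := by
  ext ⟨i, j⟩ ⟨k, l⟩
  simp [kroneckerMap_apply, sub_mul]

end Aux
set_option maxHeartbeats 1000000


section Spec
variable {m : Type*} [Fintype m] [DecidableEq m] [Nonempty m]

lemma unit_dot {S : Matrix m m ℝ} (hS : S.IsHermitian) (i : m) :
    (⇑(hS.eigenvectorBasis i) : m → ℝ) ⬝ᵥ ⇑(hS.eigenvectorBasis i) = 1 := by
  have h1 : ‖hS.eigenvectorBasis i‖ = 1 := hS.eigenvectorBasis.orthonormal.1 i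
  have h2 : (inner ℝ (hS.eigenvectorBasis i) (hS.eigenvectorBasis i) : ℝ)
      = (⇑(hS.eigenvectorBasis i) : m → ℝ) ⬝ᵥ ⇑(hS.eigenvectorBasis i) := by
    rw [EuclideanSpace.inner_eq_star_dotProduct]
    simp [dotProduct]
  rw [← h2, real_inner_self_eq_norm_sq, h1]
  norm_num

lemma lamMin_le_eig {S : Matrix m m ℝ} (hS : S.IsHermitian) (i : m) :
    lamMin S ≤ hS.eigenvalues i := by
  unfold lamMin
  rw [hS.spectrum_real_eq_range_eigenvalues]
  exact csInf_le (Set.finite_range _).bddBelow ⟨i, rfl⟩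

lemma eig_le_lamMax {S : Matrix m m ℝ} (hS : S.IsHermitian) (i : m) :
    hS.eigenvalues i ≤ lamMax S := by
  unfold lamMax
  rw [hS.spectrum_real_eq_range_eigenvalues]
  exact le_csSup (Set.finite_range _).bddAbove ⟨i, rfl⟩

lemma le_lamMin {S : Matrix m m ℝ} (hS : S.IsHermitian) {c : ℝ}
    (h : ∀ x : m → ℝ, c * (x ⬝ᵥ x) ≤ x ⬝ᵥ (S *ᵥ x)) : c ≤ lamMin S := by
  unfold lamMin
  rw [hS.spectrum_real_eq_range_eigenvalues]
  refine le_csInf (Set.range_nonempty _) ?_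
  rintro _ ⟨i, rfl⟩
  have hEv : S *ᵥ ⇑(hS.eigenvectorBasis i) = hS.eigenvalues i • ⇑(hS.eigenvectorBasis i) :=
    hS.mulVec_eigenvectorBasis i
  have := h ⇑(hS.eigenvectorBasis i)
  rw [unit_dot hS i, hEv, dotProduct_smul, unit_dot hS i, mul_one] at this
  simpa using this

lemma lamMax_le {S : Matrix m m ℝ} (hS : S.IsHermitian) {c : ℝ}
    (h : ∀ x : m → ℝ, x ⬝ᵥ (S *ᵥ x) ≤ c * (x ⬝ᵥ x)) : lamMax S ≤ c := by
  unfold lamMax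
  rw [hS.spectrum_real_eq_range_eigenvalues]
  refine csSup_le (Set.range_nonempty _) ?_
  rintro _ ⟨i, rfl⟩
  have hEv : S *ᵥ ⇑(hS.eigenvectorBasis i) = hS.eigenvalues i • ⇑(hS.eigenvectorBasis i) :=
    hS.mulVec_eigenvectorBasis i
  have := h ⇑(hS.eigenvectorBasis i)
  rw [unit_dot hS i, hEv, dotProduct_smul, unit_dot hS i, mul_one] at this
  simpa using this

lemma conj_key {S : Matrix m m ℝ} (hS : S.IsHermitian) (c : ℝ) :
    (hS.eigenvectorUnitary : Matrix m m ℝ) * (diagonal (fun i => hS.eigenvalues i - c)) *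
      star (hS.eigenvectorUnitary : Matrix m m ℝ) = S - c • 1 := by
  set U : Matrix m m ℝ := (hS.eigenvectorUnitary : Matrix m m ℝ) with hU
  have hUU : U * star U = 1 := (Matrix.mem_unitaryGroup_iff).mp hS.eigenvectorUnitary.2
  have h2 : U * (c • 1) * star U = (c • 1 : Matrix m m ℝ) := by
    rw [mul_smul_comm, smul_mul_assoc, mul_one, hUU]
  have hdiag : (diagonal (fun i => hS.eigenvalues i - c) : Matrix m m ℝ)
      = diagonal (RCLike.ofReal ∘ hS.eigenvalues) - c • 1 := by
    ext i j
    rcases eq_or_ne i j with rfl | hij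
    · simp
    · simp [hij]
  rw [hdiag, mul_sub, sub_mul, h2]
  conv_rhs => rw [hS.spectral_theorem, Unitary.conjStarAlgAut_apply]

lemma psd_of_le_eig {S : Matrix m m ℝ} (hS : S.IsHermitian) {c : ℝ}
    (h : ∀ i, c ≤ hS.eigenvalues i) : (S - c • 1).PosSemidef := by
  rw [← conj_key hS c]
  have hd : Matrix.PosSemidef (diagonal (fun i => hS.eigenvalues i - c)) := by
    refine Matrix.PosSemidef.diagonal ?_
    intro i
    simp [sub_nonneg, h i]
  have := hd.mul_mul_conjTranspose_same (hS.eigenvectorUnitary : Matrix m m ℝ)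
  rwa [← Matrix.star_eq_conjTranspose] at this

lemma conj_key' {S : Matrix m m ℝ} (hS : S.IsHermitian) (c : ℝ) :
    (hS.eigenvectorUnitary : Matrix m m ℝ) * (diagonal (fun i => c - hS.eigenvalues i)) *
      star (hS.eigenvectorUnitary : Matrix m m ℝ) = c • 1 - S := by
  have hkey := conj_key hS c
  have hneg : (diagonal (fun i => c - hS.eigenvalues i) : Matrix m m ℝ)
      = -(diagonal (fun i => hS.eigenvalues i - c)) := by
    ext i j
    rcases eq_or_ne i j with rfl | hij
    · simp
    · simp [hij]
  rw [hneg, mul_neg, neg_mul, hkey, neg_sub]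

lemma psd_of_eig_le {S : Matrix m m ℝ} (hS : S.IsHermitian) {c : ℝ}
    (h : ∀ i, hS.eigenvalues i ≤ c) : (c • 1 - S).PosSemidef := by
  rw [← conj_key' hS c]
  have hd : Matrix.PosSemidef (diagonal (fun i => c - hS.eigenvalues i)) := by
    refine Matrix.PosSemidef.diagonal ?_
    intro i
    simp [sub_nonneg, h i]
  have := hd.mul_mul_conjTranspose_same (hS.eigenvectorUnitary : Matrix m m ℝ)
  rwa [← Matrix.star_eq_conjTranspose] at this

lemma lamMax_sub_psd {S : Matrix m m ℝ} (hS : S.IsHermitian) :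
    (lamMax S • 1 - S).PosSemidef :=
  psd_of_eig_le hS (fun i => eig_le_lamMax hS i)

lemma sub_lamMin_psd {S : Matrix m m ℝ} (hS : S.IsHermitian) :
    (S - lamMin S • 1).PosSemidef :=
  psd_of_le_eig hS (fun i => lamMin_le_eig hS i)

end Spec
set_option maxHeartbeats 1000000

section Quad
variable {m : Type*} [Fintype m] [DecidableEq m]

lemma psd_quad {T : Matrix m m ℝ} (hT : T.PosSemidef) (x : m → ℝ) :
    0 ≤ x ⬝ᵥ (T *ᵥ x) := by
  simpa using hT.dotProduct_mulVec_nonneg x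

lemma quad_le {S : Matrix m m ℝ} {c : ℝ} (h : (c • 1 - S).PosSemidef) (x : m → ℝ) :
    x ⬝ᵥ (S *ᵥ x) ≤ c * (x ⬝ᵥ x) := by
  have := psd_quad h x
  rw [sub_mulVec, dotProduct_sub, smul_mulVec, one_mulVec, dotProduct_smul,
    smul_eq_mul] at this
  linarith

lemma quad_ge {S : Matrix m m ℝ} {c : ℝ} (h : (S - c • 1).PosSemidef) (x : m → ℝ) :
    c * (x ⬝ᵥ x) ≤ x ⬝ᵥ (S *ᵥ x) := by
  have := psd_quad h x
  rw [sub_mulVec, dotProduct_sub, smul_mulVec, one_mulVec, dotProduct_smul,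
    smul_eq_mul] at this
  linarith

lemma dot_self_mulVec (C : Matrix m m ℝ) (x : m → ℝ) :
    (C *ᵥ x) ⬝ᵥ (C *ᵥ x) = x ⬝ᵥ ((Cᵀ * C) *ᵥ x) := by
  conv_rhs => rw [← mulVec_mulVec, dotProduct_mulVec, vecMul_transpose]

lemma dot_self_nonneg (x : m → ℝ) : 0 ≤ x ⬝ᵥ x :=
  Finset.sum_nonneg fun i _ => mul_self_nonneg _

lemma dot_cauchy (u v : m → ℝ) : (u ⬝ᵥ v) ^ 2 ≤ (u ⬝ᵥ u) * (v ⬝ᵥ v) := by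
  have := Finset.sum_mul_sq_le_sq_mul_sq Finset.univ u v
  simpa [dotProduct, sq] using this

variable [Nonempty m]

lemma lamMax_nonneg {S : Matrix m m ℝ} (hS : S.PosSemidef) : 0 ≤ lamMax S :=
  le_trans (hS.eigenvalues_nonneg (Classical.arbitrary m))
    (eig_le_lamMax hS.isHermitian _)

open scoped MatrixOrder in
lemma sq_lamMax_psd {S : Matrix m m ℝ} (hS : S.PosSemidef) :
    ((lamMax S) ^ 2 • 1 - S * S).PosSemidef := by
  set l := lamMax S with hl
  have hl0 : 0 ≤ l := lamMax_nonneg hS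
  have hub : (l • 1 - S).PosSemidef := lamMax_sub_psd hS.isHermitian
  set R := CFC.sqrt S with hR
  have hRR : R * R = S := CFC.sqrt_mul_sqrt_self S hS.nonneg
  have hRh : Rᴴ = R := (CFC.sqrt_nonneg S).posSemidef.isHermitian
  have h1 : (R * (l • 1 - S) * R).PosSemidef := by
    have := hub.mul_mul_conjTranspose_same R
    rwa [hRh] at this
  have e1 : R * (l • 1 - S) * R = l • S - S * S := by
    rw [mul_sub, sub_mul, mul_smul_comm, mul_one, smul_mul_assoc, hRR, ← hRR]
    rw [show R * (R * R) * R = R * R * (R * R) by noncomm_ring]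
  rw [e1] at h1
  have h2 : (l • (l • 1 - S)).PosSemidef := psd_smul' hub hl0
  have e2 : l • (l • 1 - S) = l ^ 2 • 1 - l • S := by
    rw [smul_sub, smul_smul, sq]
  rw [e2] at h2
  have := h2.add h1
  rwa [sub_add_sub_cancel] at this

end Quad

theorem stmt4 (s n : ℕ) (hs : 1 ≤ s) (hn : 1 ≤ n)
    (Γ : Matrix (Fin s) (Fin s) ℝ) (hΓ : lamMin ((1 / 2 : ℝ) • (Γ + Γᵀ)) < 0)
    (M A P : Matrix (Fin n) (Fin n) ℝ)
    (hM : M.PosDef) (hA : A.PosSemidef) (hP : P.PosDef)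
    (Δt : ℝ) (hΔt : 0 ≤ Δt)
    (hdt : 0 < lamMin (hP.invSqrt * M * hP.invSqrt)
        + Δt * lamMin ((1 / 2 : ℝ) • (Γ + Γᵀ)) * lamMax (hP.invSqrt * A * hP.invSqrt))
    (B : Matrix (Fin s × Fin n) (Fin s × Fin n) ℝ)
    (hB : B = ((1 : Matrix (Fin s) (Fin s) ℝ) ⊗ₖ hP.invSqrt) *
        ((1 : Matrix (Fin s) (Fin s) ℝ) ⊗ₖ M + Δt • (Γ ⊗ₖ A)) *
        ((1 : Matrix (Fin s) (Fin s) ℝ) ⊗ₖ hP.invSqrt)) :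
    ((1 / 2 : ℝ) • (B + Bᵀ)).PosDef ∧
    ktilde B ≤
      (lamMax (hP.invSqrt * M * hP.invSqrt)
          + Δt * sigmaMax Γ * lamMax (hP.invSqrt * A * hP.invSqrt)) /
      (lamMin (hP.invSqrt * M * hP.invSqrt)
          + Δt * lamMin ((1 / 2 : ℝ) • (Γ + Γᵀ)) * lamMax (hP.invSqrt * A * hP.invSqrt)) := by
  haveI hsne : Nonempty (Fin s) := ⟨⟨0, hs⟩⟩
  haveI hnne : Nonempty (Fin n) := ⟨⟨0, hn⟩⟩
  set Q := hP.invSqrt with hQdef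
  have hQpsd : Q.PosSemidef := by
    have hd : (diagonal (Real.sqrt ∘ hP.isHermitian.eigenvalues)).PosSemidef :=
      PosSemidef.diagonal (fun i => Real.sqrt_nonneg _)
    have := hd.mul_mul_conjTranspose_same (hP.isHermitian.eigenvectorUnitary : Matrix (Fin n) (Fin n) ℝ)
    rw [← star_eq_conjTranspose] at this
    exact this.inv
  have hQh : Qᴴ = Q := hQpsd.isHermitian
  set Mt := Q * M * Q with hMt
  set At := Q * A * Q with hAt
  have hMtpsd : Mt.PosSemidef := by
    have := hM.posSemidef.mul_mul_conjTranspose_same Q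
    rwa [hQh, ← hMt] at this
  have hAtpsd : At.PosSemidef := by
    have := hA.mul_mul_conjTranspose_same Q
    rwa [hQh, ← hAt] at this
  have hMth : Mtᵀ = Mt := by rw [← real_conjT]; exact hMtpsd.isHermitian
  have hAth : Atᵀ = At := by rw [← real_conjT]; exact hAtpsd.isHermitian
  set Γs := ((1 / 2 : ℝ) • (Γ + Γᵀ)) with hΓs
  have hΓsh : Γs.IsHermitian := by
    show _ᴴ = _
    rw [hΓs, conjTranspose_smul, conjTranspose_add, real_conjT, real_conjT,
      transpose_transpose, star_trivial, add_comm Γᵀ Γ]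
  set lm := lamMin Mt with hlm
  set lM := lamMax Mt with hlM'
  set la := lamMax At with hla'
  set lg := lamMin Γs with hlg'
  set sg := sigmaMax Γ with hsg'
  have hlg : lg < 0 := hΓ
  have lapos : 0 ≤ la := lamMax_nonneg hAtpsd
  have hlM : 0 ≤ lM := lamMax_nonneg hMtpsd
  have hsg : 0 ≤ sg := Real.sqrt_nonneg _
  -- structure of B
  have hBexp : B = (1 : Matrix (Fin s) (Fin s) ℝ) ⊗ₖ Mt + Δt • (Γ ⊗ₖ At) := by
    rw [hB, mul_add, add_mul, mul_smul_comm, smul_mul_assoc,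
      ← mul_kronecker_mul, ← mul_kronecker_mul, ← mul_kronecker_mul, ← mul_kronecker_mul]
    simp only [one_mul, mul_one]
    rfl
  have hBT : Bᵀ = (1 : Matrix (Fin s) (Fin s) ℝ) ⊗ₖ Mt + Δt • (Γᵀ ⊗ₖ At) := by
    rw [hBexp, transpose_add, transpose_smul, ← kroneckerMap_transpose,
      ← kroneckerMap_transpose, transpose_one, hMth, hAth]
  have hsymB : (1 / 2 : ℝ) • (B + Bᵀ)
      = (1 : Matrix (Fin s) (Fin s) ℝ) ⊗ₖ Mt + Δt • (Γs ⊗ₖ At) := by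
    rw [hBT, hBexp, hΓs, smul_kronecker, add_kronecker]
    module
  set dn := lm + Δt * lg * la with hdn
  set nm := lM + Δt * sg * la with hnm
  have hnm0 : 0 ≤ nm := by
    have : 0 ≤ Δt * sg * la := by positivity
    rw [hnm]; linarith
  -- Claim 1 : the symmetric part dominates dn • 1
  have claim1 : ((1 / 2 : ℝ) • (B + Bᵀ) - dn • 1).PosSemidef := by
    have p1 : ((1 : Matrix (Fin s) (Fin s) ℝ) ⊗ₖ (Mt - lm • 1)).PosSemidef :=
      psd_kron Matrix.PosSemidef.one (sub_lamMin_psd hMtpsd.isHermitian)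
    have p2 : ((Γs - lg • 1) ⊗ₖ At).PosSemidef :=
      psd_kron (sub_lamMin_psd hΓsh) hAtpsd
    have p3 : ((-lg) • ((1 : Matrix (Fin s) (Fin s) ℝ) ⊗ₖ (la • 1 - At))).PosSemidef :=
      psd_smul' (psd_kron Matrix.PosSemidef.one (lamMax_sub_psd hAtpsd.isHermitian))
        (by linarith)
    have p6 := p1.add (psd_smul' (p2.add p3) hΔt)
    have e : (1 : Matrix (Fin s) (Fin s) ℝ) ⊗ₖ (Mt - lm • 1) +
        Δt • ((Γs - lg • 1) ⊗ₖ At +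
          (-lg) • ((1 : Matrix (Fin s) (Fin s) ℝ) ⊗ₖ (la • 1 - At)))
        = (1 / 2 : ℝ) • (B + Bᵀ) - dn • 1 := by
      rw [hsymB, hdn]
      simp only [kron_sub, sub_kron, kronecker_smul, smul_kronecker, one_kronecker_one]
      module
    rwa [e] at p6
  have hermsym : ((1 / 2 : ℝ) • (B + Bᵀ)).IsHermitian := by
    show _ᴴ = _
    rw [conjTranspose_smul, conjTranspose_add, real_conjT, real_conjT, transpose_transpose,
      star_trivial, add_comm Bᵀ B]
  have hdle : dn ≤ lamMin ((1 / 2 : ℝ) • (B + Bᵀ)) :=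
    le_lamMin hermsym (fun x => quad_ge claim1 x)
  have hPD : ((1 / 2 : ℝ) • (B + Bᵀ)).PosDef := by
    have hone : (dn • (1 : Matrix (Fin s × Fin n) (Fin s × Fin n) ℝ))
        = diagonal (fun _ => dn) := by
      ext i j
      rcases eq_or_ne i j with rfl | hij
      · simp
      · simp [hij]
    have hd : ((dn • 1 : Matrix (Fin s × Fin n) (Fin s × Fin n) ℝ)).PosDef := by
      rw [hone]; exact Matrix.PosDef.diagonal (fun _ => hdt)
    have := hd.add_posSemidef claim1
    rwa [show dn • (1 : Matrix (Fin s × Fin n) (Fin s × Fin n) ℝ) +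
      ((1 / 2 : ℝ) • (B + Bᵀ) - dn • 1) = (1 / 2 : ℝ) • (B + Bᵀ) by abel] at this
  refine ⟨hPD, ?_⟩
  -- numerator bound
  have hGG : (Γᵀ * Γ).PosSemidef := by
    have := posSemidef_conjTranspose_mul_self Γ
    rwa [real_conjT] at this
  have hsgsq : sg ^ 2 = lamMax (Γᵀ * Γ) := by
    rw [hsg']
    exact Real.sq_sqrt (lamMax_nonneg hGG)
  have hAtAt : (At * At).PosSemidef := by
    have := posSemidef_conjTranspose_mul_self At
    rwa [hAtpsd.isHermitian] at this
  have hMM : (lM ^ 2 • 1 - Mt * Mt).PosSemidef := sq_lamMax_psd hMtpsd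
  have hAA : (la ^ 2 • 1 - At * At).PosSemidef := sq_lamMax_psd hAtpsd
  have hGGle : (sg ^ 2 • 1 - Γᵀ * Γ).PosSemidef := by
    rw [hsgsq]; exact lamMax_sub_psd hGG.isHermitian
  have F1 : ((lM ^ 2) • (1 : Matrix (Fin s × Fin n) (Fin s × Fin n) ℝ)
      - (1 : Matrix (Fin s) (Fin s) ℝ) ⊗ₖ (Mt * Mt)).PosSemidef := by
    have h := psd_kron (Matrix.PosSemidef.one (n := Fin s)) hMM
    rwa [kron_sub, kronecker_smul, one_kronecker_one] at h
  have F2 : (((sg * la) ^ 2) • (1 : Matrix (Fin s × Fin n) (Fin s × Fin n) ℝ)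
      - (Γᵀ * Γ) ⊗ₖ (At * At)).PosSemidef := by
    have p1 := psd_kron hGGle hAtAt
    have p2 := psd_smul' (psd_kron (Matrix.PosSemidef.one (n := Fin s)) hAA) (sq_nonneg sg)
    have h := p1.add p2
    have e : (sg ^ 2 • 1 - Γᵀ * Γ) ⊗ₖ (At * At) +
        sg ^ 2 • ((1 : Matrix (Fin s) (Fin s) ℝ) ⊗ₖ (la ^ 2 • 1 - At * At))
        = ((sg * la) ^ 2) • (1 : Matrix (Fin s × Fin n) (Fin s × Fin n) ℝ)
          - (Γᵀ * Γ) ⊗ₖ (At * At) := by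
      simp only [kron_sub, sub_kron, kronecker_smul, smul_kronecker, one_kronecker_one,
        mul_pow]
      module
    rwa [e] at h
  have hBtB : (Bᵀ * B).PosSemidef := by
    have := posSemidef_conjTranspose_mul_self B
    rwa [real_conjT] at this
  have claim2 : lamMax (Bᵀ * B) ≤ nm ^ 2 := by
    refine lamMax_le hBtB.isHermitian (fun x => ?_)
    have hX : x ⬝ᵥ ((Bᵀ * B) *ᵥ x) = (B *ᵥ x) ⬝ᵥ (B *ᵥ x) := (dot_self_mulVec B x).symm
    set u := ((1 : Matrix (Fin s) (Fin s) ℝ) ⊗ₖ Mt) *ᵥ x with hu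
    set v := (Γ ⊗ₖ At) *ᵥ x with hv
    have hBx : B *ᵥ x = u + Δt • v := by rw [hBexp, add_mulVec, smul_mulVec]
    have hud : u ⬝ᵥ u ≤ lM ^ 2 * (x ⬝ᵥ x) := by
      rw [hu, dot_self_mulVec]
      have ht : ((1 : Matrix (Fin s) (Fin s) ℝ) ⊗ₖ Mt)ᵀ *
          ((1 : Matrix (Fin s) (Fin s) ℝ) ⊗ₖ Mt)
          = (1 : Matrix (Fin s) (Fin s) ℝ) ⊗ₖ (Mt * Mt) := by
        rw [← kroneckerMap_transpose, transpose_one, hMth, ← mul_kronecker_mul, one_mul]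
      rw [ht]
      exact quad_le F1 x
    have hvd : v ⬝ᵥ v ≤ (sg * la) ^ 2 * (x ⬝ᵥ x) := by
      rw [hv, dot_self_mulVec]
      have ht : (Γ ⊗ₖ At)ᵀ * (Γ ⊗ₖ At) = (Γᵀ * Γ) ⊗ₖ (At * At) := by
        rw [← kroneckerMap_transpose, hAth, ← mul_kronecker_mul]
      rw [ht]
      exact quad_le F2 x
    have hcs := dot_cauchy u v
    have hxx := dot_self_nonneg x
    have huu := dot_self_nonneg u
    have hvv := dot_self_nonneg v
    have hC : 0 ≤ lM * (sg * la) * (x ⬝ᵥ x) := by positivity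
    have h1 : (u ⬝ᵥ v) ^ 2 ≤ (lM * (sg * la) * (x ⬝ᵥ x)) ^ 2 := by
      calc (u ⬝ᵥ v) ^ 2 ≤ (u ⬝ᵥ u) * (v ⬝ᵥ v) := hcs
        _ ≤ (lM ^ 2 * (x ⬝ᵥ x)) * ((sg * la) ^ 2 * (x ⬝ᵥ x)) :=
            mul_le_mul hud hvd hvv (by positivity)
        _ = (lM * (sg * la) * (x ⬝ᵥ x)) ^ 2 := by ring
    have huv : u ⬝ᵥ v ≤ lM * (sg * la) * (x ⬝ᵥ x) := by nlinarith [h1, hC]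
    rw [hX, hBx]
    have expand : (u + Δt • v) ⬝ᵥ (u + Δt • v)
        = u ⬝ᵥ u + 2 * Δt * (u ⬝ᵥ v) + Δt ^ 2 * (v ⬝ᵥ v) := by
      simp only [dotProduct_add, add_dotProduct, dotProduct_smul, smul_dotProduct,
        smul_eq_mul]
      rw [dotProduct_comm v u]
      ring
    rw [expand, hnm]
    nlinarith [mul_le_mul_of_nonneg_left huv (by linarith : (0:ℝ) ≤ 2 * Δt),
      mul_le_mul_of_nonneg_left hvd (sq_nonneg Δt), hud]
  have hsB : sigmaMax B ≤ nm := by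
    have : sigmaMax B = Real.sqrt (lamMax (Bᵀ * B)) := rfl
    rw [this, ← Real.sqrt_sq hnm0]
    exact Real.sqrt_le_sqrt claim2
  have hktilde : ktilde B = sigmaMax B / lamMin ((1 / 2 : ℝ) • (B + Bᵀ)) := rfl
  rw [hktilde]
  exact div_le_div₀ hnm0 hsB hdt hdle
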